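/- If at least half of the L phases p_1,...,p_L each contain at most 2m̄ new requests (where m̄ is the average number of new requests per phase), then merging each such phase with its predecessor (for alternate ones) yields a partition of the sequence into at most L − ⌈L/4⌉ consecutive blocks, each requesting at most k + 2m̄ distinct items. -/

import Mathlib

/-- Length of the maximal prefix of `r` containing at most `k` distinct items. -/
def maxPrefixLen {α : Type*} [DecidableEq α] (k : ℕ) (r : List α) : ℕ :=
  ((List.range (r.length + 1)).filter (fun n => (r.take n).dedup.length ≤ k)).foldr max 0

/-- Greedy phase partition, with fuel for termination. -/
def phasesAux {α : Type*} [DecidableEq α] (k : ℕ) : ℕ → List α → List (List α)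
  | 0, _ => []
  | _, [] => []
  | (fuel+1), r =>
      let n := max 1 (maxPrefixLen k r)
      r.take n :: phasesAux k fuel (r.drop n)

/-- The `k`-phase partition of `r`: greedy maximal consecutive blocks, each
containing requests to at most `k` distinct items. -/
def phases {α : Type*} [DecidableEq α] (k : ℕ) (r : List α) : List (List α) :=
  phasesAux k r.length r

/-- `L(k,r)`: the number of `k`-phases of `r`, minus 1. -/
def numPhases {α : Type*} [DecidableEq α] (k : ℕ) (r : List α) : ℕ :=
  (phases k r).length - 1

/-- For each `k`-phase other than the first, the number of new requests:
items requested in the phase but not in the previous phase. -/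
def newCounts {α : Type*} [DecidableEq α] (k : ℕ) (r : List α) : List ℕ :=
  ((phases k r).zip (phases k r).tail).map
    (fun p => (p.2.dedup.filter (fun x => x ∉ p.1)).length)

/-- `m(k,r)`: the average number of new requests per `k`-phase (other than the first). -/
noncomputable def avgNew {α : Type*} [DecidableEq α] (k : ℕ) (r : List α) : ℝ :=
  ((newCounts k r).sum : ℝ) / (numPhases k r : ℝ)

/-- Index in `r` at which the `i`-th `k`-phase starts. -/
def phaseStart {α : Type*} [DecidableEq α] (k : ℕ) (r : List α) (i : ℕ) : ℕ :=
  (((phases k r).take i).map List.length).sum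

lemma le_foldr_max (l : List ℕ) : ∀ a ∈ l, a ≤ l.foldr max 0 := by
  induction l with
  | nil => simp
  | cons b t ih =>
    intro a ha
    rcases List.mem_cons.1 ha with rfl | ha
    · exact le_max_left _ _
    · exact le_trans (ih a ha) (le_max_right _ _)

lemma foldr_max_mem (l : List ℕ) : l.foldr max 0 = 0 ∨ l.foldr max 0 ∈ l := by
  induction l with
  | nil => left; rfl
  | cons b t ih =>
    rcases max_choice b (t.foldr max 0) with h | h
    · right; rw [List.foldr_cons, h]; exact List.mem_cons_self
    · rcases ih with h0 | hm
      · left; rw [List.foldr_cons, h, h0]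
      · right; rw [List.foldr_cons, h]; exact List.mem_cons_of_mem _ hm

lemma maxPrefixLen_spec {α : Type*} [DecidableEq α] (k : ℕ) (hk : 0 < k) (r : List α)
    (hr : r ≠ []) :
    1 ≤ maxPrefixLen k r ∧ (r.take (maxPrefixLen k r)).dedup.length ≤ k := by
  have hr1 : 1 ≤ r.length := by
    cases r with
    | nil => exact absurd rfl hr
    | cons a t => simp
  have h1mem : 1 ∈ (List.range (r.length + 1)).filter
      (fun n => (r.take n).dedup.length ≤ k) := by
    refine List.mem_filter.2 ⟨List.mem_range.2 (by omega), ?_⟩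
    have hle : (r.take 1).dedup.length ≤ (r.take 1).length :=
      (r.take 1).dedup_sublist.length_le
    have hlen : (r.take 1).length = 1 := by
      rw [List.length_take]; omega
    simp only [decide_eq_true_eq]
    omega
  have h1 : 1 ≤ maxPrefixLen k r := le_foldr_max _ 1 h1mem
  refine ⟨h1, ?_⟩
  rcases foldr_max_mem ((List.range (r.length + 1)).filter
      (fun n => (r.take n).dedup.length ≤ k)) with h0 | hm
  · unfold maxPrefixLen at h1 ⊢
    omega
  · have := List.mem_filter.1 hm
    have h2 := this.2
    simp only [decide_eq_true_eq] at h2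
    exact h2

lemma phasesAux_flatten {α : Type*} [DecidableEq α] (k : ℕ) :
    ∀ fuel (r : List α), r.length ≤ fuel → (phasesAux k fuel r).flatten = r := by
  intro fuel
  induction fuel with
  | zero =>
    intro r h
    have : r = [] := List.length_eq_zero_iff.1 (Nat.le_zero.1 h)
    subst this; rfl
  | succ n ih =>
    intro r h
    cases r with
    | nil => rfl
    | cons a t =>
      simp only [phasesAux, List.flatten_cons]
      rw [ih]
      · exact List.take_append_drop _ _
      · rw [List.length_drop]
        simp only [List.length_cons] at h ⊢
        omega

lemma phasesAux_dedup {α : Type*} [DecidableEq α] (k : ℕ) (hk : 0 < k) :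
    ∀ fuel (r : List α), ∀ b ∈ phasesAux k fuel r, b.dedup.length ≤ k := by
  intro fuel
  induction fuel with
  | zero => intro r b hb; simp [phasesAux] at hb
  | succ n ih =>
    intro r b hb
    cases r with
    | nil => simp [phasesAux] at hb
    | cons a t =>
      simp only [phasesAux, List.mem_cons] at hb
      rcases hb with rfl | hb
      · obtain ⟨h1, h2⟩ := maxPrefixLen_spec k hk (a :: t) (by simp)
        rwa [max_eq_right h1]
      · exact ih _ b hb

lemma dedup_append_le {α : Type*} [DecidableEq α] (p q : List α) :
    (p ++ q).dedup.length ≤ p.dedup.length + (q.dedup.filter (fun x => x ∉ p)).length := by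
  have h1 : (p ++ q).dedup.length = (p.toFinset ∪ q.toFinset).card := by
    rw [← List.toFinset_append, List.card_toFinset]
  have h2 : p.dedup.length = p.toFinset.card := (List.card_toFinset p).symm
  have h3 : (q.dedup.filter (fun x => x ∉ p)).length = (q.toFinset \ p.toFinset).card := by
    have hnd : (q.dedup.filter (fun x => x ∉ p)).Nodup := q.nodup_dedup.filter _
    rw [← List.toFinset_card_of_nodup hnd]
    congr 1
    ext x
    simp [List.mem_filter, Finset.mem_sdiff, and_comm]
  rw [h1, h2, h3]
  calc (p.toFinset ∪ q.toFinset).card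
      = (p.toFinset ∪ (q.toFinset \ p.toFinset)).card := by
        rw [Finset.union_sdiff_self_eq_union]
    _ ≤ p.toFinset.card + (q.toFinset \ p.toFinset).card := Finset.card_union_le _ _

lemma bind_pure_cast (l : List ℕ) :
    (l >>= (fun a : ℕ => (pure (Nat.cast a) : List ℝ))) = l.map (fun a : ℕ => (a : ℝ)) := by
  induction l with
  | nil => rfl
  | cons a t ih =>
    show (a :: t).flatMap _ = _
    simp only [List.flatMap_cons, List.map_cons]
    rw [← ih]; rfl

open scoped Classical in
noncomputable def mergeBlocks {α : Type*} [DecidableEq α] (c : ℝ) : List (List α) → List (List α)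
  | [] => []
  | [p] => [p]
  | p :: q :: rest =>
      if ((q.dedup.filter (fun x => x ∉ p)).length : ℝ) ≤ c then
        (p ++ q) :: mergeBlocks c rest
      else
        p :: mergeBlocks c (q :: rest)

open scoped Classical in
noncomputable def countGood {α : Type*} [DecidableEq α] (c : ℝ) (l : List (List α)) : ℕ :=
  (l.zip l.tail).countP
    (fun p => decide (((p.2.dedup.filter (fun x => x ∉ p.1)).length : ℝ) ≤ c))

lemma mergeBlocks_flatten {α : Type*} [DecidableEq α] (c : ℝ) (l : List (List α)) :
    (mergeBlocks c l).flatten = l.flatten := by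
  induction l using mergeBlocks.induct c
  case x_1 => infer_instance
  case case1 => rfl
  case case2 => rfl
  case case3 p q rest h ih =>
    simp only [mergeBlocks]; rw [if_pos h]; simp [ih]
  case case4 p q rest h ih =>
    simp only [mergeBlocks]; rw [if_neg h]; simp [ih]

lemma mergeBlocks_dedup {α : Type*} [DecidableEq α] (c : ℝ) (k : ℕ) (hc : 0 ≤ c)
    (l : List (List α)) (hall : ∀ p ∈ l, p.dedup.length ≤ k) :
    ∀ b ∈ mergeBlocks c l, (b.dedup.length : ℝ) ≤ (k : ℝ) + c := by
  induction l using mergeBlocks.induct c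
  case x_1 => infer_instance
  case case1 => intro b hb; simp [mergeBlocks] at hb
  case case2 p =>
    intro b hb
    simp only [mergeBlocks, List.mem_singleton] at hb
    subst hb
    have := hall b (by simp)
    have : (b.dedup.length : ℝ) ≤ (k : ℝ) := by exact_mod_cast this
    linarith
  case case3 p q rest h ih =>
    intro b hb
    simp only [mergeBlocks] at hb
    rw [if_pos h] at hb
    rcases List.mem_cons.1 hb with rfl | hb
    · have h6 := dedup_append_le p q
      have hp : p.dedup.length ≤ k := hall p (by simp)
      have h6' : ((p ++ q).dedup.length : ℝ)
          ≤ (p.dedup.length : ℝ) + ((q.dedup.filter (fun x => x ∉ p)).length : ℝ) := by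
        exact_mod_cast h6
      have hp' : (p.dedup.length : ℝ) ≤ (k : ℝ) := by exact_mod_cast hp
      linarith
    · exact ih (fun x hx => hall x (by simp [hx])) b hb
  case case4 p q rest h ih =>
    intro b hb
    simp only [mergeBlocks] at hb
    rw [if_neg h] at hb
    rcases List.mem_cons.1 hb with rfl | hb
    · have hp : (b.dedup.length : ℝ) ≤ (k : ℝ) := by
        exact_mod_cast hall b (by simp)
      linarith
    · exact ih (fun x hx => hall x (by simp [hx])) b hb

lemma countGood_cons_le {α : Type*} [DecidableEq α] (c : ℝ) (x : List α)
    (t : List (List α)) : countGood c (x :: t) ≤ 1 + countGood c t := by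
  cases t with
  | nil => simp [countGood]
  | cons y s =>
    unfold countGood
    simp only [List.tail_cons, List.zip_cons_cons, List.countP_cons]
    split <;> omega

lemma mergeBlocks_length {α : Type*} [DecidableEq α] (c : ℝ) (l : List (List α)) :
    2 * (mergeBlocks c l).length + countGood c l ≤ 2 * l.length := by
  induction l using mergeBlocks.induct c
  case x_1 => infer_instance
  case case1 => simp [mergeBlocks, countGood]
  case case2 p => simp [mergeBlocks, countGood]
  case case3 p q rest h ih =>
    have hc1 : countGood c (p :: q :: rest) ≤ 1 + countGood c (q :: rest) :=
      countGood_cons_le c p (q :: rest)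
    have hc2 : countGood c (q :: rest) ≤ 1 + countGood c rest :=
      countGood_cons_le c q rest
    have hlen : (mergeBlocks c (p :: q :: rest)).length = 1 + (mergeBlocks c rest).length := by
      simp only [mergeBlocks]; rw [if_pos h]; simp [Nat.add_comm]
    simp only [List.length_cons]
    omega
  case case4 p q rest h ih =>
    have hc1 : countGood c (p :: q :: rest) = countGood c (q :: rest) := by
      unfold countGood
      simp only [List.tail_cons, List.zip_cons_cons, List.countP_cons]
      rw [decide_eq_false h]
      simp
    have hlen : (mergeBlocks c (p :: q :: rest)).length
        = 1 + (mergeBlocks c (q :: rest)).length := by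
      simp only [mergeBlocks]; rw [if_neg h]; simp [Nat.add_comm]
    simp only [List.length_cons] at ih ⊢
    omega

/-- if at least half of the `L` phases after the first contain at
most `2m̄` new requests, then merging alternate such phases with their
predecessors yields a partition of `r` into consecutive blocks, each requesting
at most `k + 2m̄` distinct items, with at least `⌈L/4⌉` fewer blocks than the
`L+1` phases. -/
theorem merge_phases_partition {α : Type*} [DecidableEq α] (k : ℕ) (hk : 0 < k)
    (r : List α) (hL : 1 ≤ numPhases k r)
    (hhalf : numPhases k r ≤
      2 * ((newCounts k r).countP (fun x => decide ((x : ℝ) ≤ 2 * avgNew k r)))) :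
    ∃ blocks : List (List α), blocks.flatten = r ∧
      (∀ b ∈ blocks, (b.dedup.length : ℝ) ≤ (k : ℝ) + 2 * avgNew k r) ∧
      blocks.length + (numPhases k r + 3) / 4 ≤ numPhases k r + 1 := by
  set c : ℝ := 2 * avgNew k r with hc
  set P : List (List α) := phases k r with hP
  set L : ℕ := numPhases k r with hLdef
  have hPL : L = P.length - 1 := rfl
  have hlen : P.length = L + 1 := by omega
  have hflat : P.flatten = r := phasesAux_flatten k r.length r le_rfl
  have hded : ∀ p ∈ P, p.dedup.length ≤ k := fun p hp => phasesAux_dedup k hk r.length r p hp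
  have hc0 : 0 ≤ c := by
    rw [hc]
    have : 0 ≤ avgNew k r := by
      unfold avgNew
      positivity
    linarith
  have hCbridge : (newCounts k r).countP (fun x => decide ((x : ℝ) ≤ 2 * avgNew k r))
      = countGood c P := by
    rw [show ((newCounts k r : List ℝ)) = (newCounts k r).map (fun a : ℕ => (a : ℝ)) from
      bind_pure_cast _]
    unfold newCounts countGood
    rw [List.countP_map, List.countP_map]
    refine List.countP_congr ?_
    intro a _
    simp only [Function.comp_apply, decide_eq_decide]
    exact Iff.rfl
  refine ⟨mergeBlocks c P, ?_, ?_, ?_⟩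
  · rw [mergeBlocks_flatten, hflat]
  · exact mergeBlocks_dedup c k hc0 P hded
  · have h9 := mergeBlocks_length c P
    rw [hCbridge] at hhalf
    rw [hlen] at h9
    omega
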